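/- arXiv:1806.02596 — 2 statements merged into one kernel-verified Lean document; each statement's English description precedes it below -/
import Mathlib

section
/- Let $k \geq 2$ be an integer, $\alpha \geq 1$ a real, and let $c_1, \dots, c_k \geq 0$ be reals with $\sum_j c_j = 1$, $c_a = \max_j c_j$, $c_b = \max_{j \neq a} c_j$ and $c_a = \alpha \cdot c_b$. Then $\sum_j c_j^2 \geq \frac{\alpha^2 + k - 1}{(\alpha + k - 1)^2}$. -/
/-- Lower bound on the collision probability `∑ c_j²` in terms of the bias `α`
between the dominant opinion `a` and second-dominant opinion `b`. -/
theorem collision_prob_lower_bound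
    (k : ℕ) (hk : 2 ≤ k) (α : ℝ) (hα : 1 ≤ α)
    (c : Fin k → ℝ) (hc : ∀ j, 0 ≤ c j) (hsum : ∑ j, c j = 1)
    (a b : Fin k) (hab : a ≠ b)
    (ha : ∀ j, c j ≤ c a)
    (hb : ∀ j, j ≠ a → c j ≤ c b)
    (hbias : c a = α * c b) :
    (α ^ 2 + k - 1) / ((α + k - 1) ^ 2) ≤ ∑ j, (c j) ^ 2 := by
  have hk' : (2:ℝ) ≤ (k:ℝ) := by exact_mod_cast hk
  set m : ℝ := (k:ℝ) - 1 with hm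
  have hm1 : 1 ≤ m := by simp [hm]; linarith
  have hm0 : 0 < m := by linarith
  set s := Finset.univ.erase a with hs
  have hcard : (s.card : ℝ) = m := by
    rw [hs, Finset.card_erase_of_mem (Finset.mem_univ a), Finset.card_univ, Fintype.card_fin,
      Nat.cast_sub (by omega : 1 ≤ k)]
    simp [hm]
  have hsumS : ∑ j ∈ s, c j = 1 - c a := by
    rw [← hsum, hs, ← Finset.sum_erase_add Finset.univ c (Finset.mem_univ a)]
    ring
  have hsqS : ∑ j, (c j) ^ 2 = c a ^ 2 + ∑ j ∈ s, (c j) ^ 2 := by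
    rw [hs, ← Finset.sum_erase_add Finset.univ (fun j => (c j)^2) (Finset.mem_univ a)]
    ring
  set E := ∑ j ∈ s, (c j) ^ 2 with hE
  -- Cauchy-Schwarz
  have hCS : (1 - c a) ^ 2 ≤ m * E := by
    have h := Finset.sum_mul_sq_le_sq_mul_sq s (fun _ => (1:ℝ)) c
    simp only [one_mul, one_pow] at h
    rw [Finset.sum_const, nsmul_eq_mul, hsumS] at h
    calc (1 - c a)^2 ≤ (s.card : ℝ) * 1 * E := h
      _ = m * E := by rw [hcard]; ring
  -- bound on c a
  have hlow : α ≤ c a * (α + m) := by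
    have h1 : ∑ j ∈ s, c j ≤ ∑ j ∈ s, c b := by
      apply Finset.sum_le_sum
      intro j hj
      exact hb j (Finset.ne_of_mem_erase hj)
    rw [Finset.sum_const, nsmul_eq_mul, hcard] at h1
    rw [hsumS] at h1
    -- 1 - c a ≤ m * c b, c a = α * c b
    have hb0 : 0 ≤ c b := hc b
    have h2 : 1 ≤ (α + m) * c b := by nlinarith
    have hα0 : 0 < α := by linarith
    nlinarith
  have hden : 0 < (α + m) ^ 2 := by positivity
  have hgoal : (α ^ 2 + m) / ((α + m) ^ 2) ≤ ∑ j, (c j) ^ 2 := by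
    rw [div_le_iff₀ hden, hsqS]
    have hca0 : 0 ≤ c a := hc a
    nlinarith [sq_nonneg (c a * (α + m) - α), sq_nonneg (1 - c a),
      mul_nonneg hm0.le (sub_nonneg.mpr hlow),
      mul_le_mul_of_nonneg_left hCS (le_of_lt hm0)]
  have : (α ^ 2 + (k:ℝ) - 1) / ((α + (k:ℝ) - 1) ^ 2) = (α ^ 2 + m) / ((α + m) ^ 2) := by
    rw [hm]; ring_nf
  rw [this]
  exact hgoal
end

section
/- Let $(a_i)_{i \geq 0}$ be a sequence in $(1/2, 1)$ satisfying $a_{i+1} \geq \frac{a_i^2}{a_i^2 + (1 - a_i)^2}$ for all $i$, and suppose $a_0 \geq \frac{k}{k+1}$ for some real $k > 1$. Then for all $j \geq 0$, $a_j \geq 1 - \frac{1}{1 + k^{2^j}}$. -/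
lemma step_ineq (K x : ℝ) (hK : 1 < K) (hx1 : x < 1)
    (hx : 1 - 1 / (1 + K) ≤ x) :
    1 - 1 / (1 + K ^ 2) ≤ x ^ 2 / (x ^ 2 + (1 - x) ^ 2) := by
  have hK0 : (0:ℝ) < 1 + K := by linarith
  have hK2 : (0:ℝ) < 1 + K ^ 2 := by nlinarith
  have hx' : K / (1 + K) ≤ x := by
    have : 1 - 1 / (1 + K) = K / (1 + K) := by field_simp; ring
    linarith [this ▸ hx]
  have hxK : K * (1 - x) ≤ x := by
    rw [div_le_iff₀ hK0] at hx'
    nlinarith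
  have hxpos : (0:ℝ) < x := by nlinarith
  have h1x : (0:ℝ) ≤ 1 - x := by linarith
  have hden : (0:ℝ) < x ^ 2 + (1 - x) ^ 2 := by positivity
  have hK1 : (0:ℝ) ≤ K := by linarith
  have key : K ^ 2 * (1 - x) ^ 2 ≤ x ^ 2 := by
    nlinarith [mul_nonneg (sub_nonneg.mpr hxK) (add_nonneg hxpos.le (mul_nonneg hK1 h1x))]
  have hLHS : 1 - 1 / (1 + K ^ 2) = K ^ 2 / (1 + K ^ 2) := by field_simp; ring
  rw [hLHS, div_le_div_iff₀ hK2 hden]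
  nlinarith

/-- Doubly exponential convergence of the dominant fraction towards 1. -/
theorem dominant_fraction_doubly_exponential
    (k : ℝ) (hk : 1 < k)
    (a : ℕ → ℝ)
    (hmem : ∀ i, a i ∈ Set.Ioo (1 / 2 : ℝ) 1)
    (hrec : ∀ i, (a i) ^ 2 / ((a i) ^ 2 + (1 - a i) ^ 2) ≤ a (i + 1))
    (h0 : k / (k + 1) ≤ a 0) :
    ∀ j, 1 - 1 / (1 + k ^ (2 ^ j)) ≤ a j := by
  intro j
  induction j with
  | zero =>
    have hk0 : (0:ℝ) < k + 1 := by linarith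
    have : 1 - 1 / (1 + k ^ (2 ^ 0)) = k / (k + 1) := by
      rw [pow_zero, pow_one]
      rw [eq_div_iff (by linarith : k + 1 ≠ 0)]
      field_simp
      ring_nf
    linarith [this ▸ h0]
  | succ j ih =>
    have hK : 1 < k ^ (2 ^ j) := one_lt_pow₀ hk (by positivity)
    have hstep := step_ineq (k ^ (2 ^ j)) (a j) hK (hmem j).2 ih
    have heq : k ^ (2 ^ (j + 1)) = (k ^ (2 ^ j)) ^ 2 := by
      rw [← pow_mul, ← pow_succ]
    rw [heq]
    exact hstep.trans (hrec j)
end
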